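/- Let ε₀ and ε₁ be i.i.d. real random variables whose common distribution is symmetric about zero, and let φ : ℝ → ℝ be a measurable function such that φ(ε₁ − ε₀)·(ε₀ + ε₁) is integrable. Then E[φ(ε₁ − ε₀)·(ε₀ + ε₁)] = 0. -/

import Mathlib

open MeasureTheory ProbabilityTheory

/-- If `ε₀, ε₁` are i.i.d. real random variables whose common
distribution is symmetric about zero, and `φ : ℝ → ℝ` is measurable with
`φ(ε₁ − ε₀)·(ε₀ + ε₁)` integrable, then `E[φ(ε₁ − ε₀)·(ε₀ + ε₁)] = 0`. -/
theorem stmt5 {Ω : Type*} [MeasurableSpace Ω] (μ : Measure Ω)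
    [IsProbabilityMeasure μ] (ε₀ ε₁ : Ω → ℝ)
    (hmeas₀ : Measurable ε₀) (hmeas₁ : Measurable ε₁)
    (hindep : IndepFun ε₀ ε₁ μ) (hid : IdentDistrib ε₀ ε₁ μ μ)
    (hsym : μ.map ε₀ = μ.map (fun ω => -ε₀ ω))
    (φ : ℝ → ℝ) (hφ : Measurable φ)
    (hint : Integrable (fun ω => φ (ε₁ ω - ε₀ ω) * (ε₀ ω + ε₁ ω)) μ) :
    ∫ ω, φ (ε₁ ω - ε₀ ω) * (ε₀ ω + ε₁ ω) ∂μ = 0 := by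
  set g : ℝ × ℝ → ℝ := fun p => φ (p.2 - p.1) * (p.1 + p.2) with hg
  have hgm : Measurable g := ((hφ.comp (measurable_snd.sub measurable_fst)).mul
    (measurable_fst.add measurable_snd))
  set m : Measure ℝ := μ.map ε₀ with hm
  have : IsProbabilityMeasure m := Measure.isProbabilityMeasure_map hmeas₀.aemeasurable
  have hm1 : μ.map ε₁ = m := hid.map_eq.symm
  have hprod : μ.map (fun ω => (ε₀ ω, ε₁ ω)) = m.prod m := by
    rw [(indepFun_iff_map_prod_eq_prod_map_map hmeas₀.aemeasurable
      hmeas₁.aemeasurable).mp hindep, hm1]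
  have hneg : m.map Neg.neg = m := by
    rw [hm, Measure.map_map measurable_neg hmeas₀]
    exact hsym.symm
  have hT : (m.prod m).map (fun p : ℝ × ℝ => (-p.2, -p.1)) = m.prod m := by
    have h1 : (fun p : ℝ × ℝ => (-p.2, -p.1))
        = (Prod.map (Neg.neg : ℝ → ℝ) Neg.neg) ∘ Prod.swap := rfl
    rw [h1, ← Measure.map_map (Measurable.prodMap measurable_neg measurable_neg) measurable_swap,
      Measure.prod_swap, ← Measure.map_prod_map _ _ measurable_neg measurable_neg, hneg]
  have hpair : Measurable (fun ω => (ε₀ ω, ε₁ ω)) := hmeas₀.prodMk hmeas₁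
  have hI : ∫ ω, φ (ε₁ ω - ε₀ ω) * (ε₀ ω + ε₁ ω) ∂μ = ∫ p, g p ∂(m.prod m) := by
    rw [← hprod, integral_map hpair.aemeasurable hgm.aestronglyMeasurable]
  have hI2 : ∫ p, g p ∂(m.prod m) = - ∫ p, g p ∂(m.prod m) := by
    conv_lhs => rw [← hT, integral_map
      ((show Measurable (fun p : ℝ × ℝ => (-p.2, -p.1)) from measurable_snd.neg.prodMk measurable_fst.neg)).aemeasurable
      hgm.aestronglyMeasurable]
    rw [← integral_neg]
    congr 1
    funext p
    simp only [hg]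
    ring
  rw [hI]
  linarith [hI2]
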